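/- arXiv:2408.09963 — 2 statements merged into one kernel-verified Lean document; each statement's English description precedes it below -/
import Mathlib

section
/- Let B ≤ Λ(n₁, q) and C ≤ Λ(n₂, q) be alternating matrix spaces and let A ≤ Λ(n₁+n₂, q) be their disjoint direct sum. A subspace W ≤ F_q^{n₁+n₂} is totally-isotropic for A if and only if π₁(W) is totally-isotropic for B and π₂(W) is totally-isotropic for C, where π₁, π₂ are the projections onto the first n₁ and last n₂ coordinates. -/
open Matrix

def IsTotallyIsotropic {F : Type} [Field F] {ι : Type} [Fintype ι]
    (𝓜 : Submodule F (Matrix ι ι F)) (U : Submodule F (ι → F)) : Prop :=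
  ∀ u ∈ U, ∀ v ∈ U, ∀ M ∈ 𝓜, u ⬝ᵥ M *ᵥ v = 0

/-- The disjoint direct sum of two alternating matrix spaces. -/
noncomputable def disjointDirectSum {F : Type} [Field F] {n₁ n₂ : ℕ}
    (𝓑 : Submodule F (Matrix (Fin n₁) (Fin n₁) F))
    (𝓒 : Submodule F (Matrix (Fin n₂) (Fin n₂) F)) :
    Submodule F (Matrix (Fin n₁ ⊕ Fin n₂) (Fin n₁ ⊕ Fin n₂) F) :=
  Submodule.span F
    ((fun B => Matrix.fromBlocks B 0 0 0) '' ↑𝓑 ∪ (fun C => Matrix.fromBlocks 0 0 0 C) '' ↑𝓒)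

lemma key1 {F : Type} [Field F] {n₁ n₂ : ℕ} (B : Matrix (Fin n₁) (Fin n₁) F)
    (w v : (Fin n₁ ⊕ Fin n₂) → F) :
    w ⬝ᵥ (Matrix.fromBlocks B 0 0 0) *ᵥ v = (w ∘ Sum.inl) ⬝ᵥ B *ᵥ (v ∘ Sum.inl) := by
  have hw : w = Sum.elim (w ∘ Sum.inl) (w ∘ Sum.inr) := by ext x; cases x <;> rfl
  have hv : v = Sum.elim (v ∘ Sum.inl) (v ∘ Sum.inr) := by ext x; cases x <;> rfl
  rw [hw, hv, fromBlocks_mulVec, sumElim_dotProduct_sumElim]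
  simp

lemma key2 {F : Type} [Field F] {n₁ n₂ : ℕ} (C : Matrix (Fin n₂) (Fin n₂) F)
    (w v : (Fin n₁ ⊕ Fin n₂) → F) :
    w ⬝ᵥ (Matrix.fromBlocks 0 0 0 C) *ᵥ v = (w ∘ Sum.inr) ⬝ᵥ C *ᵥ (v ∘ Sum.inr) := by
  have hw : w = Sum.elim (w ∘ Sum.inl) (w ∘ Sum.inr) := by ext x; cases x <;> rfl
  have hv : v = Sum.elim (v ∘ Sum.inl) (v ∘ Sum.inr) := by ext x; cases x <;> rfl
  rw [hw, hv, fromBlocks_mulVec, sumElim_dotProduct_sumElim]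
  simp

theorem isotropic_direct_sum_iff {F : Type} [Field F] [Fintype F] {n₁ n₂ : ℕ}
    (𝓑 : Submodule F (Matrix (Fin n₁) (Fin n₁) F))
    (𝓒 : Submodule F (Matrix (Fin n₂) (Fin n₂) F))
    (haltB : ∀ B ∈ 𝓑, ∀ u : Fin n₁ → F, u ⬝ᵥ B *ᵥ u = 0)
    (haltC : ∀ C ∈ 𝓒, ∀ u : Fin n₂ → F, u ⬝ᵥ C *ᵥ u = 0)
    (W : Submodule F ((Fin n₁ ⊕ Fin n₂) → F)) :
    IsTotallyIsotropic (disjointDirectSum 𝓑 𝓒) W ↔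
      IsTotallyIsotropic 𝓑 (W.map (LinearMap.funLeft F F Sum.inl)) ∧
        IsTotallyIsotropic 𝓒 (W.map (LinearMap.funLeft F F Sum.inr)) := by
  constructor
  · intro h
    constructor
    · rintro u hu v hv B hB
      obtain ⟨w, hw, rfl⟩ := hu
      obtain ⟨w', hw', rfl⟩ := hv
      have : Matrix.fromBlocks B 0 0 0 ∈ disjointDirectSum 𝓑 𝓒 :=
        Submodule.subset_span (Or.inl ⟨B, hB, rfl⟩)
      have := h w hw w' hw' _ this
      rwa [key1] at this
    · rintro u hu v hv C hC
      obtain ⟨w, hw, rfl⟩ := hu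
      obtain ⟨w', hw', rfl⟩ := hv
      have : Matrix.fromBlocks 0 0 0 C ∈ disjointDirectSum 𝓑 𝓒 :=
        Submodule.subset_span (Or.inr ⟨C, hC, rfl⟩)
      have := h w hw w' hw' _ this
      rwa [key2] at this
  · rintro ⟨h1, h2⟩ u hu v hv M hM
    induction hM using Submodule.span_induction with
    | mem M hMmem =>
      rcases hMmem with ⟨B, hB, rfl⟩ | ⟨C, hC, rfl⟩
      · rw [key1]
        exact h1 _ ⟨u, hu, rfl⟩ _ ⟨v, hv, rfl⟩ B hB
      · rw [key2]
        exact h2 _ ⟨u, hu, rfl⟩ _ ⟨v, hv, rfl⟩ C hC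
    | zero => simp
    | add M N _ _ hM hN => rw [Matrix.add_mulVec, dotProduct_add, hM, hN, add_zero]
    | smul c M _ hM => rw [Matrix.smul_mulVec, dotProduct_smul, hM, smul_zero]
end

section
/- Let B ≤ Λ(n₁, q) and C ≤ Λ(n₂, q) be alternating matrix spaces over the finite field F_q, and let A ≤ Λ(n₁+n₂, q) be their disjoint direct sum. Then the totally-isotropic polynomials satisfy TI(A, x) = TI(B, x) · TI(C, x) in Z[x]. -/
open Polynomial Matrix

/-- `x_q^i := ∏_{j=0}^{i-1} (x - (q^j - 1)) ∈ ℤ[x]` for a fixed value `q`. -/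
noncomputable def xq (q : ℕ) (i : ℕ) : Polynomial ℤ :=
  ∏ j ∈ Finset.range i, (X - C ((q : ℤ) ^ j - 1))

/-- The totally-isotropic polynomial `TI(𝓓, x) = 1 + ∑_{i=1}^{α(𝓓)} c_i(𝓓) x_q^i`,
written as `∑_{i=0}^{dim} c_i(𝓓) x_q^i` (the `i = 0` term is `1`, and `c_i(𝓓) = 0` for
`i > α(𝓓)`). -/
noncomputable def TIpoly {F : Type} [Field F] [Fintype F] {ι : Type} [Fintype ι]
    (𝓓 : Submodule F (Matrix ι ι F)) : Polynomial ℤ :=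
  ∑ i ∈ Finset.range (Fintype.card ι + 1),
    (Nat.card {U : Submodule F (ι → F) //
        IsTotallyIsotropic 𝓓 U ∧ Module.finrank F U = i} : ℤ) • xq (Fintype.card F) i

namespace TIaux

open Module

variable {F : Type} [Field F] [Fintype F]

instance {ι κ : Type} [Fintype ι] [Fintype κ] : Finite ((ι → F) →ₗ[F] (κ → F)) :=
  Finite.of_injective _ DFunLike.coe_injective

/-- Number of surjective linear maps `F^m → F^i`. -/
noncomputable def Nsur (F : Type) [Field F] [Fintype F] (m i : ℕ) : ℕ :=
  Nat.card {χ : (Fin m → F) →ₗ[F] (Fin i → F) // Function.Surjective χ}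

/-- Number of linear maps `F^m → F^ι` with totally isotropic image. -/
noncomputable def TIcount {ι : Type} [Fintype ι] (𝓓 : Submodule F (Matrix ι ι F)) (m : ℕ) : ℕ :=
  Nat.card {φ : (Fin m → F) →ₗ[F] (ι → F) // IsTotallyIsotropic 𝓓 (LinearMap.range φ)}

omit [Fintype F] in
lemma surjective_iff_injective_transpose {m i : ℕ} (M : Matrix (Fin i) (Fin m) F) :
    Function.Surjective M.mulVecLin ↔ Function.Injective Mᵀ.mulVecLin := by
  have h1 : Function.Surjective M.mulVecLin ↔ M.rank = i := by
    rw [← LinearMap.range_eq_top]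
    constructor
    · intro h
      rw [Matrix.rank, h, finrank_top, Module.finrank_fintype_fun_eq_card, Fintype.card_fin]
    · intro h
      apply Submodule.eq_top_of_finrank_eq
      rw [← Matrix.rank, h, Module.finrank_fintype_fun_eq_card, Fintype.card_fin]
  have h2 : Function.Injective Mᵀ.mulVecLin ↔ M.rank = i := by
    rw [← LinearMap.ker_eq_bot, ← Submodule.finrank_eq_zero]
    have hrn := LinearMap.finrank_range_add_finrank_ker Mᵀ.mulVecLin
    rw [Module.finrank_fintype_fun_eq_card, Fintype.card_fin] at hrn
    have ht : finrank F ↥(LinearMap.range Mᵀ.mulVecLin) = M.rank := Matrix.rank_transpose M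
    omega
  rw [h1, h2]

noncomputable def surjEquivLI (m i : ℕ) :
    {χ : (Fin m → F) →ₗ[F] (Fin i → F) // Function.Surjective χ}
      ≃ {s : Fin i → (Fin m → F) // LinearIndependent F s} := by
  have e1 : {χ : (Fin m → F) →ₗ[F] (Fin i → F) // Function.Surjective χ}
      ≃ {M : Matrix (Fin i) (Fin m) F // Function.Surjective M.mulVecLin} :=
    LinearMap.toMatrix'.toEquiv.subtypeEquiv fun χ => by
      rw [show (LinearMap.toMatrix'.toEquiv χ).mulVecLin = χ from
        LinearMap.toMatrix'.symm_apply_apply χ]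
  have e2 : {M : Matrix (Fin i) (Fin m) F // Function.Surjective M.mulVecLin}
      ≃ {s : Fin i → (Fin m → F) // LinearIndependent F s} :=
    Matrix.of.symm.subtypeEquiv fun M => by
      rw [surjective_iff_injective_transpose,
        show (Mᵀ.mulVecLin : (Fin i → F) → (Fin m → F)) = Mᵀ.mulVec from rfl,
        Matrix.mulVec_injective_iff]
      exact Iff.rfl
  exact e1.trans e2

lemma card_Nsur (m i : ℕ) :
    (Nsur F m i : ℤ)
      = ∏ j ∈ Finset.range i, ((Fintype.card F : ℤ) ^ m - (Fintype.card F : ℤ) ^ j) := by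
  by_cases h : i ≤ m
  · rw [Nsur, Nat.card_congr (surjEquivLI m i),
      card_linearIndependent (by simpa [Module.finrank_fintype_fun_eq_card] using h)]
    simp only [Module.finrank_fintype_fun_eq_card, Fintype.card_fin]
    rw [← Fin.prod_univ_eq_prod_range
        (fun j => ((Fintype.card F : ℤ) ^ m - (Fintype.card F : ℤ) ^ j)) i]
    rw [Nat.cast_prod]
    refine Finset.prod_congr rfl fun j _ => ?_
    have hj : (j : ℕ) ≤ m := by have := j.2; omega
    have hle : Fintype.card F ^ (j : ℕ) ≤ Fintype.card F ^ m :=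
      Nat.pow_le_pow_right Fintype.card_pos hj
    push_cast [Nat.cast_sub hle]
    ring
  · have hempty : IsEmpty {χ : (Fin m → F) →ₗ[F] (Fin i → F) // Function.Surjective χ} := by
      constructor
      rintro ⟨χ, hχ⟩
      have h1 : finrank F ↥(LinearMap.range χ) ≤ m := by
        simpa [Module.finrank_fintype_fun_eq_card] using LinearMap.finrank_range_le χ
      rw [LinearMap.range_eq_top.mpr hχ, finrank_top, Module.finrank_fintype_fun_eq_card,
        Fintype.card_fin] at h1
      omega
    rw [Nsur, Nat.card_of_isEmpty,
      Finset.prod_eq_zero (Finset.mem_range.mpr (by omega) : m ∈ Finset.range i)]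
    · simp
    · simp

noncomputable def rangeEqEquivSurj {ι : Type} [Fintype ι] {m : ℕ} (U : Submodule F (ι → F)) :
    {φ : (Fin m → F) →ₗ[F] (ι → F) // LinearMap.range φ = U}
      ≃ {ψ : (Fin m → F) →ₗ[F] U // Function.Surjective ψ} where
  toFun φ := ⟨(φ.1).codRestrict U (fun x => le_of_eq φ.2 (LinearMap.mem_range_self _ x)), by
    rintro ⟨u, hu⟩
    rw [← φ.2] at hu
    obtain ⟨x, hx⟩ := hu
    exact ⟨x, Subtype.ext hx⟩⟩
  invFun ψ := ⟨U.subtype ∘ₗ ψ.1, by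
    rw [LinearMap.range_comp, LinearMap.range_eq_top.mpr ψ.2, Submodule.map_subtype_top]⟩
  left_inv φ := Subtype.ext (LinearMap.ext fun x => rfl)
  right_inv ψ := Subtype.ext (LinearMap.ext fun x => Subtype.ext rfl)

noncomputable def surjCongr {W U U' : Type} [AddCommGroup W] [Module F W]
    [AddCommGroup U] [Module F U] [AddCommGroup U'] [Module F U'] (e : U ≃ₗ[F] U') :
    {ψ : W →ₗ[F] U // Function.Surjective ψ} ≃ {χ : W →ₗ[F] U' // Function.Surjective χ} :=
  (LinearEquiv.arrowCongr (LinearEquiv.refl F W) e).toEquiv.subtypeEquiv fun ψ => by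
    constructor
    · intro h y
      obtain ⟨x, hx⟩ := h (e.symm y)
      exact ⟨x, by simpa [LinearEquiv.arrowCongr_apply] using congrArg e hx⟩
    · intro h y
      obtain ⟨x, hx⟩ := h (e y)
      refine ⟨x, ?_⟩
      have := congrArg e.symm hx
      simpa [LinearEquiv.arrowCongr_apply] using this

lemma card_fiber {ι : Type} [Fintype ι] {m : ℕ} (U : Submodule F (ι → F)) :
    Nat.card {φ : (Fin m → F) →ₗ[F] (ι → F) // LinearMap.range φ = U}
      = Nsur F m (Module.finrank F U) := by
  exact Nat.card_congr ((rangeEqEquivSurj U).trans (surjCongr (Module.finBasis F U).equivFun))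

lemma TIcount_eq_sum {ι : Type} [Fintype ι] (𝓓 : Submodule F (Matrix ι ι F)) (m : ℕ) :
    TIcount 𝓓 m = ∑ i ∈ Finset.range (Fintype.card ι + 1),
      Nat.card {U : Submodule F (ι → F) //
        IsTotallyIsotropic 𝓓 U ∧ Module.finrank F U = i} * Nsur F m i := by
  classical
  set g : {φ : (Fin m → F) →ₗ[F] (ι → F) // IsTotallyIsotropic 𝓓 (LinearMap.range φ)}
      → {U : Submodule F (ι → F) // IsTotallyIsotropic 𝓓 U} :=
    fun φ => ⟨LinearMap.range φ.1, φ.2⟩ with hg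
  have E2 : ∀ U : {U : Submodule F (ι → F) // IsTotallyIsotropic 𝓓 U},
      {x : {φ : (Fin m → F) →ₗ[F] (ι → F) // IsTotallyIsotropic 𝓓 (LinearMap.range φ)} // g x = U}
        ≃ {φ : (Fin m → F) →ₗ[F] (ι → F) // LinearMap.range φ = U.1} := fun U =>
    { toFun := fun x => ⟨x.1.1, congrArg Subtype.val x.2⟩
      invFun := fun y => ⟨⟨y.1, by rw [y.2]; exact U.2⟩, Subtype.ext y.2⟩
      left_inv := fun x => Subtype.ext (Subtype.ext rfl)
      right_inv := fun y => rfl }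
  have E : {φ : (Fin m → F) →ₗ[F] (ι → F) // IsTotallyIsotropic 𝓓 (LinearMap.range φ)}
      ≃ Σ U : {U : Submodule F (ι → F) // IsTotallyIsotropic 𝓓 U},
          {φ : (Fin m → F) →ₗ[F] (ι → F) // LinearMap.range φ = U.1} :=
    (Equiv.sigmaFiberEquiv g).symm.trans (Equiv.sigmaCongrRight E2)
  haveI : Fintype {U : Submodule F (ι → F) // IsTotallyIsotropic 𝓓 U} := Fintype.ofFinite _
  haveI : ∀ U : Submodule F (ι → F),
      Fintype {φ : (Fin m → F) →ₗ[F] (ι → F) // LinearMap.range φ = U} :=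
    fun U => Fintype.ofFinite _
  rw [TIcount, Nat.card_congr E, Nat.card_eq_fintype_card, Fintype.card_sigma]
  have step1 : ∀ U : {U : Submodule F (ι → F) // IsTotallyIsotropic 𝓓 U},
      Fintype.card {φ : (Fin m → F) →ₗ[F] (ι → F) // LinearMap.range φ = U.1}
        = Nsur F m (Module.finrank F U.1) := by
    intro U
    rw [← Nat.card_eq_fintype_card, card_fiber]
  rw [Finset.sum_congr rfl fun U _ => step1 U]
  rw [← Finset.sum_fiberwise_of_maps_to
    (g := fun U : {U : Submodule F (ι → F) // IsTotallyIsotropic 𝓓 U} => Module.finrank F U.1)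
    (t := Finset.range (Fintype.card ι + 1))
    (fun U _ => by
      simp only [Finset.mem_range_succ_iff]
      exact le_trans (Submodule.finrank_le _) (Module.finrank_fintype_fun_eq_card F).le)
    (fun U => Nsur F m (Module.finrank F U.1))]
  refine Finset.sum_congr rfl fun i _ => ?_
  rw [Finset.sum_congr rfl (fun U hU => by
    rw [(Finset.mem_filter.mp hU).2]), Finset.sum_const, smul_eq_mul]
  congr 1
  rw [← Fintype.card_subtype, ← Nat.card_eq_fintype_card]
  exact Nat.card_congr (Equiv.subtypeSubtypeEquivSubtypeInter
    (fun U : Submodule F (ι → F) => IsTotallyIsotropic 𝓓 U)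
    (fun U : Submodule F (ι → F) => Module.finrank F U = i))

lemma eval_TIpoly {ι : Type} [Fintype ι] (𝓓 : Submodule F (Matrix ι ι F)) (m : ℕ) :
    Polynomial.eval ((Fintype.card F : ℤ) ^ m - 1) (TIpoly 𝓓) = TIcount 𝓓 m := by
  rw [TIpoly, Polynomial.eval_finset_sum, TIcount_eq_sum]
  push_cast
  refine Finset.sum_congr rfl fun i _ => ?_
  rw [Polynomial.eval_smul, smul_eq_mul, card_Nsur]
  congr 1
  rw [xq, Polynomial.eval_prod]
  refine Finset.prod_congr rfl fun j _ => ?_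
  rw [Polynomial.eval_sub, Polynomial.eval_X, Polynomial.eval_C, sub_sub_sub_cancel_right]


omit [Fintype F] in
lemma isTI_span_iff {ι : Type} [Fintype ι] {S : Set (Matrix ι ι F)} {U : Submodule F (ι → F)} :
    IsTotallyIsotropic (Submodule.span F S) U ↔ ∀ u ∈ U, ∀ v ∈ U, ∀ M ∈ S, u ⬝ᵥ M *ᵥ v = 0 := by
  constructor
  · exact fun h u hu v hv M hM => h u hu v hv M (Submodule.subset_span hM)
  · intro h u hu v hv M hM
    induction hM using Submodule.span_induction with
    | mem x hx => exact h u hu v hv x hx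
    | zero => simp
    | add x y _ _ hx hy => rw [add_mulVec, dotProduct_add, hx, hy, add_zero]
    | smul c x _ hx => rw [smul_mulVec, dotProduct_smul, hx, smul_zero]

omit [Fintype F] in
lemma block_apply₁ {n₁ n₂ : ℕ} (B : Matrix (Fin n₁) (Fin n₁) F)
    (u v : Fin n₁ ⊕ Fin n₂ → F) :
    u ⬝ᵥ (Matrix.fromBlocks B 0 0 0) *ᵥ v = (u ∘ Sum.inl) ⬝ᵥ B *ᵥ (v ∘ Sum.inl) := by
  nth_rewrite 1 [← Sum.elim_comp_inl_inr u]
  rw [fromBlocks_mulVec, sumElim_dotProduct_sumElim]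
  simp [zero_mulVec]

omit [Fintype F] in
lemma block_apply₂ {n₁ n₂ : ℕ} (C : Matrix (Fin n₂) (Fin n₂) F)
    (u v : Fin n₁ ⊕ Fin n₂ → F) :
    u ⬝ᵥ (Matrix.fromBlocks 0 0 0 C) *ᵥ v = (u ∘ Sum.inr) ⬝ᵥ C *ᵥ (v ∘ Sum.inr) := by
  nth_rewrite 1 [← Sum.elim_comp_inl_inr u]
  rw [fromBlocks_mulVec, sumElim_dotProduct_sumElim]
  simp [zero_mulVec]

omit [Fintype F] in
lemma isTI_dds_iff {n₁ n₂ : ℕ} (𝓑 : Submodule F (Matrix (Fin n₁) (Fin n₁) F))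
    (𝓒 : Submodule F (Matrix (Fin n₂) (Fin n₂) F))
    (U : Submodule F ((Fin n₁ ⊕ Fin n₂) → F)) :
    IsTotallyIsotropic (disjointDirectSum 𝓑 𝓒) U ↔
      IsTotallyIsotropic 𝓑 (U.map (LinearMap.funLeft F F Sum.inl)) ∧
      IsTotallyIsotropic 𝓒 (U.map (LinearMap.funLeft F F Sum.inr)) := by
  rw [disjointDirectSum, isTI_span_iff]
  constructor
  · intro h
    constructor
    · rintro _ ⟨u, hu, rfl⟩ _ ⟨v, hv, rfl⟩ B hB
      have := h u hu v hv _ (Or.inl ⟨B, hB, rfl⟩)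
      rwa [block_apply₁] at this
    · rintro _ ⟨u, hu, rfl⟩ _ ⟨v, hv, rfl⟩ C hC
      have := h u hu v hv _ (Or.inr ⟨C, hC, rfl⟩)
      rwa [block_apply₂] at this
  · rintro ⟨h₁, h₂⟩ u hu v hv M hM
    rcases hM with ⟨B, hB, rfl⟩ | ⟨C, hC, rfl⟩
    · rw [block_apply₁]
      exact h₁ _ (Submodule.mem_map_of_mem hu) _ (Submodule.mem_map_of_mem hv) B hB
    · rw [block_apply₂]
      exact h₂ _ (Submodule.mem_map_of_mem hu) _ (Submodule.mem_map_of_mem hv) C hC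

lemma TIcount_disjoint {n₁ n₂ : ℕ}
    (𝓑 : Submodule F (Matrix (Fin n₁) (Fin n₁) F))
    (𝓒 : Submodule F (Matrix (Fin n₂) (Fin n₂) F)) (m : ℕ) :
    TIcount (disjointDirectSum 𝓑 𝓒) m = TIcount 𝓑 m * TIcount 𝓒 m := by
  classical
  set π₁ : ((Fin n₁ ⊕ Fin n₂) → F) →ₗ[F] (Fin n₁ → F) := LinearMap.funLeft F F Sum.inl with hπ₁
  set π₂ : ((Fin n₁ ⊕ Fin n₂) → F) →ₗ[F] (Fin n₂ → F) := LinearMap.funLeft F F Sum.inr with hπ₂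
  set J : ((Fin n₁ → F) × (Fin n₂ → F)) ≃ₗ[F] ((Fin n₁ ⊕ Fin n₂) → F) :=
    (LinearEquiv.sumArrowLequivProdArrow (Fin n₁) (Fin n₂) F F).symm with hJ
  have hcomp₁ : ∀ (φ₁ : (Fin m → F) →ₗ[F] (Fin n₁ → F)) (φ₂ : (Fin m → F) →ₗ[F] (Fin n₂ → F)),
      π₁ ∘ₗ ((J : ((Fin n₁ → F) × (Fin n₂ → F)) →ₗ[F] _) ∘ₗ (φ₁.prod φ₂)) = φ₁ := by
    intro φ₁ φ₂
    ext x j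
    rfl
  have hcomp₂ : ∀ (φ₁ : (Fin m → F) →ₗ[F] (Fin n₁ → F)) (φ₂ : (Fin m → F) →ₗ[F] (Fin n₂ → F)),
      π₂ ∘ₗ ((J : ((Fin n₁ → F) × (Fin n₂ → F)) →ₗ[F] _) ∘ₗ (φ₁.prod φ₂)) = φ₂ := by
    intro φ₁ φ₂
    ext x j
    rfl
  have E : {φ : (Fin m → F) →ₗ[F] ((Fin n₁ ⊕ Fin n₂) → F) //
        IsTotallyIsotropic (disjointDirectSum 𝓑 𝓒) (LinearMap.range φ)}
      ≃ {φ₁ : (Fin m → F) →ₗ[F] (Fin n₁ → F) // IsTotallyIsotropic 𝓑 (LinearMap.range φ₁)}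
        × {φ₂ : (Fin m → F) →ₗ[F] (Fin n₂ → F) // IsTotallyIsotropic 𝓒 (LinearMap.range φ₂)} :=
    { toFun := fun φ =>
        ⟨⟨π₁ ∘ₗ φ.1, by
            rw [LinearMap.range_comp]
            exact ((isTI_dds_iff 𝓑 𝓒 _).mp φ.2).1⟩,
         ⟨π₂ ∘ₗ φ.1, by
            rw [LinearMap.range_comp]
            exact ((isTI_dds_iff 𝓑 𝓒 _).mp φ.2).2⟩⟩
      invFun := fun p =>
        ⟨(J : ((Fin n₁ → F) × (Fin n₂ → F)) →ₗ[F] _) ∘ₗ (p.1.1.prod p.2.1), by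
          rw [isTI_dds_iff]
          constructor
          · rw [← LinearMap.range_comp, hcomp₁]
            exact p.1.2
          · rw [← LinearMap.range_comp, hcomp₂]
            exact p.2.2⟩
      left_inv := fun φ => by
        apply Subtype.ext
        apply LinearMap.ext
        intro x
        funext j
        cases j <;> rfl
      right_inv := fun p => by
        apply Prod.ext
        · exact Subtype.ext (hcomp₁ p.1.1 p.2.1)
        · exact Subtype.ext (hcomp₂ p.1.1 p.2.1) }
  rw [TIcount, Nat.card_congr E, Nat.card_prod]
  rfl

end TIaux

theorem TIpoly_disjointDirectSum {F : Type} [Field F] [Fintype F] {n₁ n₂ : ℕ}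
    (𝓑 : Submodule F (Matrix (Fin n₁) (Fin n₁) F))
    (𝓒 : Submodule F (Matrix (Fin n₂) (Fin n₂) F))
    (haltB : ∀ B ∈ 𝓑, ∀ u : Fin n₁ → F, u ⬝ᵥ B *ᵥ u = 0)
    (haltC : ∀ C ∈ 𝓒, ∀ u : Fin n₂ → F, u ⬝ᵥ C *ᵥ u = 0) :
    TIpoly (disjointDirectSum 𝓑 𝓒) = TIpoly 𝓑 * TIpoly 𝓒 := by
  have hq : 1 < Fintype.card F := Fintype.one_lt_card
  have key : ∀ m : ℕ, Polynomial.eval ((Fintype.card F : ℤ) ^ m - 1)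
      (TIpoly (disjointDirectSum 𝓑 𝓒) - TIpoly 𝓑 * TIpoly 𝓒) = 0 := by
    intro m
    rw [Polynomial.eval_sub, Polynomial.eval_mul, TIaux.eval_TIpoly, TIaux.eval_TIpoly,
      TIaux.eval_TIpoly, TIaux.TIcount_disjoint]
    push_cast
    ring
  have hinf : {x : ℤ | (TIpoly (disjointDirectSum 𝓑 𝓒) - TIpoly 𝓑 * TIpoly 𝓒).IsRoot x}.Infinite := by
    apply Set.infinite_of_injective_forall_mem
      (f := fun m : ℕ => (Fintype.card F : ℤ) ^ m - 1)
    · have h : StrictMono fun m : ℕ => (Fintype.card F : ℤ) ^ m := fun a b hab =>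
        pow_lt_pow_right₀ (by exact_mod_cast hq) hab
      exact fun a b hab => h.injective (by simpa [sub_left_inj] using hab)
    · intro m
      exact key m
  exact sub_eq_zero.mp (Polynomial.eq_zero_of_infinite_isRoot _ hinf)
end
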